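/- Every compatible set S of traces admits a least upper bound under the prefix order: there exists a trace u such that x ≤ u for all x ∈ S, and every trace z satisfying x ≤ z for all x ∈ S satisfies u ≤ z. Moreover, every operation occurring in u occurs in some element of S. -/

import Mathlib

open Classical

universe u v w

/-- Operations `a` and `b` commute in state `q`. -/
def CommuteIn {Q : Type u} {O : Type v} {R : Type w}
    (σ : O → Q → R × Q) (a b : O) (q : Q) : Prop :=
  ∃ (ra rb : R) (q1 q2 q' : Q),
    σ a q = (ra, q1) ∧ σ b q1 = (rb, q') ∧ σ b q = (rb, q2) ∧ σ a q2 = (ra, q')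

/-- Operations `a` and `b` conflict: they fail to commute in some state. -/
def Conflict {Q : Type u} {O : Type v} {R : Type w}
    (σ : O → Q → R × Q) (a b : O) : Prop :=
  ∃ q : Q, ¬ CommuteIn σ a b q

/-- Position in `s` of the `i`-th (0-indexed) occurrence of `o`, if it exists. -/
noncomputable def occIdx {O : Type v} (s : List O) (o : O) (i : ℕ) : Option ℕ :=
  ((List.range s.length).filter (fun k => decide (s[k]? = some o)))[i]?

/-- The `i`-th occurrence of `a` precedes the `j`-th occurrence of `b` in `s`. -/
def Precedes {O : Type v} (s : List O) (a : O) (i : ℕ) (b : O) (j : ℕ) : Prop :=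
  ∃ p q : ℕ, occIdx s a i = some p ∧ occIdx s b j = some q ∧ p < q

/-- Schedule equivalence: same multiset of operations, and the relative order of
any two occurrences of conflicting operations is the same. -/
def ScheduleEquiv {Q : Type u} {O : Type v} {R : Type w}
    (σ : O → Q → R × Q) (s s' : List O) : Prop :=
  (↑s : Multiset O) = (↑s' : Multiset O) ∧
  ∀ (a b : O) (i j : ℕ), Conflict σ a b →
    (Precedes s a i b j ↔ Precedes s' a i b j)

/-- `~` is an equivalence relation (proved here to form the quotient). -/
def scheduleSetoid {Q : Type u} {O : Type v} {R : Type w}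
    (σ : O → Q → R × Q) : Setoid (List O) :=
  ⟨ScheduleEquiv σ,
    ⟨fun _ => ⟨rfl, fun _ _ _ _ _ => Iff.rfl⟩,
     fun h => ⟨h.1.symm, fun a b i j hc => (h.2 a b i j hc).symm⟩,
     fun h h' => ⟨h.1.trans h'.1, fun a b i j hc => (h.2 a b i j hc).trans (h'.2 a b i j hc)⟩⟩⟩

/-- Traces: equivalence classes of schedules. -/
def Trace {Q : Type u} {O : Type v} {R : Type w} (σ : O → Q → R × Q) :=
  Quotient (scheduleSetoid σ)

/-- Prefix order on traces. -/
def TraceLe {Q : Type u} {O : Type v} {R : Type w}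
    (σ : O → Q → R × Q) (x y : Trace σ) : Prop :=
  ∃ s u : List O, x = Quotient.mk (scheduleSetoid σ) s ∧
    y = Quotient.mk (scheduleSetoid σ) (s ++ u)

/-- Executing a schedule from state `q`. -/
def execTrace {Q : Type u} {O : Type v} {R : Type w}
    (σ : O → Q → R × Q) : List O → Q → List (R × Q)
  | [], _ => []
  | o :: s, q => (σ o q) :: execTrace σ s (σ o q).2

/-- Return value of the `i`-th (0-indexed) occurrence of `o` in `s`,
executed from the initial state `q0`. -/
noncomputable def retStar {Q : Type u} {O : Type v} {R : Type w}
    (σ : O → Q → R × Q) (q0 : Q) (o : O) (i : ℕ) (s : List O) : Option R :=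
  (occIdx s o i).bind fun k => ((execTrace σ s q0)[k]?).map Prod.fst
/-- A set of traces is compatible if it has a common extension. -/
def Compatible {Q : Type u} {O : Type v} {R : Type w}
    (σ : O → Q → R × Q) (S : Set (Trace σ)) : Prop :=
  ∃ z : Trace σ, ∀ x ∈ S, TraceLe σ x z


-- ===== auxiliary lemmas =====

theorem getElem?_isSome' {α : Type*} (l : List α) (i : ℕ) : l[i]?.isSome ↔ i < l.length := by
  rcases Nat.lt_or_ge i l.length with h | h
  · simp [List.getElem?_eq_getElem h, h]
  · simp [List.getElem?_eq_none h]; omega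

noncomputable def cb (P : ℕ → Bool) (p : ℕ) : ℕ := ((List.range p).filter P).length

theorem cb_succ (P : ℕ → Bool) (p : ℕ) :
    cb P (p+1) = cb P p + (if P p then 1 else 0) := by
  unfold cb
  rw [List.range_succ, List.filter_append, List.length_append]
  congr 1
  by_cases h : P p <;> simp [h]

theorem cb_mono (P : ℕ → Bool) {p q : ℕ} (h : p ≤ q) : cb P p ≤ cb P q := by
  induction q with
  | zero => have : p = 0 := by omega
            subst this; exact le_refl _
  | succ n ih =>
    rcases Nat.lt_or_ge p (n+1) with h' | h'
    · have h1 := ih (by omega)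
      have h2 := cb_succ P n
      split at h2 <;> omega
    · have : p = n + 1 := by omega
      subst this; exact le_refl _

theorem cb_lt (P : ℕ → Bool) {p q : ℕ} (h : p < q) (hP : P p = true) : cb P p < cb P q := by
  have h1 : cb P (p+1) = cb P p + 1 := by rw [cb_succ, hP]; simp
  have := cb_mono P (q := q) (p := p+1) h
  omega

theorem sort_char (P : ℕ → Bool) (n i p : ℕ) :
    ((List.range n).filter P)[i]? = some p ↔ (p < n ∧ P p = true ∧ cb P p = i) := by
  induction n generalizing i with
  | zero => simp
  | succ n ih =>
    rw [List.range_succ, List.filter_append]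
    by_cases hn : P n = true
    · have hfn : List.filter P [n] = [n] := by simp [hn]
      rw [hfn]
      rcases Nat.lt_trichotomy i ((List.range n).filter P).length with h | h | h
      · rw [List.getElem?_append_left h]
        rw [ih]
        constructor
        · rintro ⟨h1, h2, h3⟩; exact ⟨by omega, h2, h3⟩
        · rintro ⟨h1, h2, h3⟩
          refine ⟨?_, h2, h3⟩
          rcases Nat.lt_or_ge p n with h' | h'
          · exact h'
          · have : p = n := by omega
            subst this
            exfalso; unfold cb at h3; omega
      · rw [List.getElem?_append_right (by omega)]
        rw [h]; simp only [Nat.sub_self]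
        simp only [List.getElem?_cons_zero]
        constructor
        · rintro h'; injection h' with h'; subst h'
          exact ⟨by omega, hn, by unfold cb; omega⟩
        · rintro ⟨h1, h2, h3⟩
          congr 1
          by_contra hne
          have hpn : p < n := by omega
          have := cb_lt P hpn h2
          unfold cb at *; omega
      · rw [List.getElem?_append_right (by omega)]
        rw [List.getElem?_eq_none (by simp; omega)]
        constructor
        · rintro ⟨⟩
        · rintro ⟨h1, h2, h3⟩
          exfalso
          have hle : cb P p ≤ cb P n := cb_mono P (by omega)
          unfold cb at *; omega
    · have hfn : List.filter P [n] = [] := by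
        simp only [Bool.not_eq_true] at hn; simp [hn]
      rw [hfn, List.append_nil, ih]
      constructor
      · rintro ⟨h1, h2, h3⟩; exact ⟨by omega, h2, h3⟩
      · rintro ⟨h1, h2, h3⟩
        refine ⟨?_, h2, h3⟩
        rcases Nat.lt_or_ge p n with h' | h'
        · exact h'
        · have : p = n := by omega
          subst this; rw [h2] at hn; exact absurd rfl hn

section OccLemmas
variable {O : Type v}

noncomputable def oP (s : List O) (o : O) : ℕ → Bool := fun k => decide (s[k]? = some o)

theorem occIdx_def (s : List O) (o : O) (i : ℕ) :
    occIdx s o i = ((List.range s.length).filter (oP s o))[i]? := rfl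

theorem occ_char {s : List O} {o : O} {i p : ℕ} :
    occIdx s o i = some p ↔ (p < s.length ∧ s[p]? = some o ∧ cb (oP s o) p = i) := by
  rw [occIdx_def, sort_char]
  simp [oP]

theorem cb_count (s : List O) (o : O) : cb (oP s o) s.length = s.count o := by
  induction s with
  | nil => simp [cb]
  | cons a s ih =>
    show cb (oP (a::s) o) (s.length + 1) = _
    unfold cb
    rw [List.range_succ_eq_map]
    simp only [List.filter]
    rw [List.filter_map]
    have h1 : (oP (a::s) o) ∘ Nat.succ = oP s o := by
      funext k; simp [oP, Function.comp]
    rw [h1]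
    have h2 : oP (a::s) o 0 = decide (a = o) := by simp [oP]
    rw [List.count_cons]
    by_cases h : a = o
    · rw [h2]; simp [h]
      unfold cb at ih; omega
    · rw [h2]; simp [h]
      unfold cb at ih; omega

theorem occ_isSome {s : List O} {o : O} {i : ℕ} :
    (occIdx s o i).isSome ↔ i < s.count o := by
  rw [occIdx_def, getElem?_isSome']
  rw [show ((List.range s.length).filter (oP s o)).length = cb (oP s o) s.length from rfl]
  rw [cb_count]

theorem occ_pos_lt {s : List O} {o : O} {i p : ℕ} (h : occIdx s o i = some p) :
    p < s.length := (occ_char.mp h).1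

theorem occList_append (s w : List O) (o : O) :
    (List.range (s ++ w).length).filter (oP (s ++ w) o)
      = (List.range s.length).filter (oP s o)
        ++ ((List.range w.length).filter (oP w o)).map (s.length + ·) := by
  rw [List.length_append, List.range_add, List.filter_append]
  congr 1
  · apply List.filter_congr
    intro k hk
    simp only [List.mem_range] at hk
    simp [oP, List.getElem?_append_left hk]
  · rw [List.filter_map]
    congr 1
    apply List.filter_congr
    intro k hk
    simp only [List.mem_range] at hk
    simp [oP, Function.comp, List.getElem?_append_right (Nat.le_add_right s.length k)]

theorem occIdx_append (s w : List O) (o : O) (i : ℕ) :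
    occIdx (s ++ w) o i =
      if i < s.count o then occIdx s o i
      else (occIdx w o (i - s.count o)).map (s.length + ·) := by
  rw [occIdx_def, occList_append]
  have hlen : ((List.range s.length).filter (oP s o)).length = s.count o := cb_count s o
  split
  · rw [List.getElem?_append_left (by omega), occIdx_def]
  · rw [List.getElem?_append_right (by omega), List.getElem?_map, hlen, occIdx_def]

theorem pre_isSome {s : List O} {a b : O} {i j : ℕ} (h : Precedes s a i b j) :
    i < s.count a ∧ j < s.count b := by
  obtain ⟨p, q, h1, h2, _⟩ := h
  exact ⟨occ_isSome.mp (by rw [h1]; rfl), occ_isSome.mp (by rw [h2]; rfl)⟩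

theorem pre_prefix_iff {s w : List O} {a b : O} {i j : ℕ}
    (ha : i < s.count a) (hb : j < s.count b) :
    Precedes (s ++ w) a i b j ↔ Precedes s a i b j := by
  unfold Precedes
  rw [occIdx_append, occIdx_append, if_pos ha, if_pos hb]

theorem pre_mixed {s w : List O} {a b : O} {i j : ℕ}
    (ha : i < s.count a) (hb : s.count b ≤ j) (hb2 : j < (s ++ w).count b) :
    Precedes (s ++ w) a i b j := by
  have h1 : (occIdx (s ++ w) a i).isSome := by
    rw [occ_isSome, List.count_append]; omega
  have h2 : (occIdx (s ++ w) b j).isSome := occ_isSome.mpr hb2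
  obtain ⟨p, hp⟩ := Option.isSome_iff_exists.mp h1
  obtain ⟨q, hq⟩ := Option.isSome_iff_exists.mp h2
  refine ⟨p, q, hp, hq, ?_⟩
  rw [occIdx_append, if_pos ha] at hp
  have hps : p < s.length := occ_pos_lt hp
  rw [occIdx_append, if_neg (by omega)] at hq
  obtain ⟨q', _, hq'⟩ := Option.map_eq_some_iff.mp hq
  omega

theorem pre_mixed_false {s w : List O} {a b : O} {i j : ℕ}
    (ha : s.count a ≤ i) (hb : j < s.count b) :
    ¬ Precedes (s ++ w) a i b j := by
  rintro ⟨p, q, hp, hq, hlt⟩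
  rw [occIdx_append, if_neg (by omega)] at hp
  rw [occIdx_append, if_pos hb] at hq
  obtain ⟨p', _, hp'⟩ := Option.map_eq_some_iff.mp hp
  have hqs : q < s.length := occ_pos_lt hq
  omega

theorem pre_suffix_iff {s w : List O} {a b : O} {i j : ℕ}
    (ha : s.count a ≤ i) (hb : s.count b ≤ j) :
    Precedes (s ++ w) a i b j ↔ Precedes w a (i - s.count a) b (j - s.count b) := by
  unfold Precedes
  rw [occIdx_append, occIdx_append, if_neg (by omega), if_neg (by omega)]
  constructor
  · rintro ⟨p, q, hp, hq, hlt⟩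
    obtain ⟨p', hp', rfl⟩ := Option.map_eq_some_iff.mp hp
    obtain ⟨q', hq', rfl⟩ := Option.map_eq_some_iff.mp hq
    exact ⟨p', q', hp', hq', by omega⟩
  · rintro ⟨p, q, hp, hq, hlt⟩
    exact ⟨s.length + p, s.length + q, by rw [hp]; rfl, by rw [hq]; rfl, by omega⟩


end OccLemmas

section CbExtras
variable {O : Type v}

theorem cb_congr {P Q : ℕ → Bool} {p : ℕ} (h : ∀ k, k < p → P k = Q k) :
    cb P p = cb Q p := by
  unfold cb
  rw [List.filter_congr (fun k hk => h k (List.mem_range.mp hk))]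

theorem cb_tail_false {P : ℕ → Bool} {p n : ℕ} (hpn : p ≤ n)
    (h : ∀ k, p ≤ k → k < n → P k = false) : cb P n = cb P p := by
  unfold cb
  rw [show n = p + (n - p) by omega, List.range_add, List.filter_append,
    List.length_append]
  have : (List.filter P (List.map (fun x => p + x) (List.range (n - p)))) = [] := by
    rw [List.filter_eq_nil_iff]
    intro a ha
    simp only [List.mem_map, List.mem_range] at ha
    obtain ⟨k, hk, rfl⟩ := ha
    rw [h (p + k) (by omega) (by omega)]
    simp
  rw [this]
  simp

theorem cb_partition (P Q : ℕ → Bool) (p : ℕ) :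
    cb (fun k => Q k && P k) p + cb (fun k => Q k && !P k) p = cb Q p := by
  induction p with
  | zero => simp [cb]
  | succ m ih =>
    rw [cb_succ, cb_succ, cb_succ]
    cases hq : Q m <;> cases hp : P m <;> simp [hq, hp] <;> omega

theorem cb_le_of_imp {P Q : ℕ → Bool} {p : ℕ} (h : ∀ k, k < p → P k = true → Q k = true) :
    cb P p ≤ cb Q p := by
  induction p with
  | zero => simp [cb]
  | succ m ih =>
    rw [cb_succ, cb_succ]
    have h1 := ih (fun k hk => h k (by omega))
    cases hP : P m
    · simp only [Bool.false_eq_true, if_false]; split <;> omega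
    · rw [h m (by omega) hP]; simp; omega

theorem cb_prefix {s w : List O} {o : O} {m : ℕ} (hm : m ≤ s.length) :
    cb (oP (s ++ w) o) m = cb (oP s o) m := by
  apply cb_congr
  intro k hk
  simp [oP, List.getElem?_append_left (by omega : k < s.length)]

theorem cb_add (s w : List O) (o : O) (m : ℕ) :
    cb (oP (s ++ w) o) (s.length + m) = s.count o + cb (oP w o) m := by
  unfold cb
  rw [List.range_add, List.filter_append, List.length_append]
  congr 1
  · rw [show ((List.range s.length).filter (oP (s ++ w) o)).length
        = cb (oP (s ++ w) o) s.length from rfl]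
    rw [cb_prefix (le_refl _), cb_count]
  · rw [List.filter_map, List.length_map]
    congr 1
    apply List.filter_congr
    intro k hk
    simp [oP, Function.comp, List.getElem?_append_right (Nat.le_add_right s.length k)]

theorem cb_take {s : List O} {o : O} {m : ℕ} (hm : m ≤ s.length) :
    cb (oP s o) m = (s.take m).count o := by
  have h1 : cb (oP s o) m = cb (oP (s.take m) o) m := by
    apply cb_congr
    intro k hk
    simp [oP, List.getElem?_take, hk]
  have hl : (s.take m).length = m := by rw [List.length_take]; omega
  have h2 := cb_count (s.take m) o
  rw [hl] at h2
  exact h1.trans h2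
  
theorem take_filter_range {Pb : ℕ → Bool} {p n : ℕ} (hpn : p ≤ n) :
    ((List.range n).filter Pb).take (cb Pb p) = (List.range p).filter Pb := by
  rw [show n = p + (n - p) by omega, List.range_add, List.filter_append]
  exact List.take_left' rfl

theorem cb_map_sel (f : ℕ → O) (Pb : ℕ → Bool) (o : O) {p n : ℕ} (hpn : p ≤ n) :
    cb (oP (((List.range n).filter Pb).map f) o) (cb Pb p)
      = cb (fun k => (f k == o) && Pb k) p := by
  have hlen : cb Pb p ≤ (((List.range n).filter Pb).map f).length := by
    rw [List.length_map]
    exact cb_mono Pb hpn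
  rw [cb_take hlen, ← List.map_take, take_filter_range hpn,
    List.count_eq_countP, List.countP_map]
  rw [List.countP_eq_length_filter, List.filter_filter]
  rfl

theorem map_getD_range (t : List O) (d : O) :
    (List.range t.length).map (fun k => t.getD k d) = t := by
  apply List.ext_getElem?
  intro n
  rcases Nat.lt_or_ge n t.length with h | h
  · rw [List.getElem?_map, List.getElem?_range h]
    simp only [Option.map_some]
    rw [List.getD_eq_getElem?_getD, List.getElem?_eq_getElem h]
    simp [List.getElem?_eq_getElem h]
  · rw [List.getElem?_eq_none h, List.getElem?_eq_none (by simpa using h)]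

theorem getD_elem {t : List O} {d : O} {k : ℕ} (hk : k < t.length) :
    t[k]? = some (t.getD k d) := by
  rw [List.getD_eq_getElem?_getD, List.getElem?_eq_getElem hk]
  rfl

end CbExtras

section EquivLemmas
variable {Q : Type u} {O : Type v} {R : Type w} (σ : O → Q → R × Q)

theorem conflict_symm {a b : O} (h : Conflict σ a b) : Conflict σ b a := by
  obtain ⟨q, hq⟩ := h
  refine ⟨q, fun hcomm => hq ?_⟩
  obtain ⟨ra, rb, q1, q2, q', h1, h2, h3, h4⟩ := hcomm
  exact ⟨rb, ra, q2, q1, q', h3, h4, h1, h2⟩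

theorem equiv_count {s s' : List O} (h : ScheduleEquiv σ s s') (o : O) :
    s.count o = s'.count o :=
  (Multiset.coe_eq_coe.mp h.1).count_eq o

theorem equiv_of_counts_pre {s s' : List O}
    (hc : ∀ o : O, s.count o = s'.count o)
    (hp : ∀ (a b : O) (i j : ℕ), Conflict σ a b →
      (Precedes s a i b j ↔ Precedes s' a i b j)) :
    ScheduleEquiv σ s s' := by
  refine ⟨?_, hp⟩
  apply Multiset.ext.mpr
  intro o
  rw [Multiset.coe_count, Multiset.coe_count]
  exact hc o

theorem equiv_append_right {s s' : List O} (w : List O) (h : ScheduleEquiv σ s s') :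
    ScheduleEquiv σ (s ++ w) (s' ++ w) := by
  have hcnt : ∀ o : O, s.count o = s'.count o := equiv_count σ h
  apply equiv_of_counts_pre
  · intro o
    rw [List.count_append, List.count_append, hcnt o]
  · intro a b i j hcab
    rcases Nat.lt_or_ge i (s.count a) with hi | hi <;>
      rcases Nat.lt_or_ge j (s.count b) with hj | hj
    · rw [pre_prefix_iff hi hj, pre_prefix_iff (by rw [← hcnt]; exact hi)
        (by rw [← hcnt]; exact hj)]
      exact h.2 a b i j hcab
    · rcases Nat.lt_or_ge j ((s ++ w).count b) with hj2 | hj2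
      · constructor
        · intro _
          exact pre_mixed (by rw [← hcnt]; exact hi) (by rw [← hcnt]; exact hj)
            (by rw [List.count_append, ← hcnt]; rw [List.count_append] at hj2; exact hj2)
        · intro _
          exact pre_mixed hi hj hj2
      · constructor
        · intro hpre
          exact absurd (pre_isSome hpre).2 (by omega)
        · intro hpre
          have := (pre_isSome hpre).2
          rw [List.count_append, ← hcnt b] at this
          rw [List.count_append] at hj2
          omega
    · constructor
      · intro hpre
        exact absurd hpre (pre_mixed_false hi hj)
      · intro hpre
        exact absurd hpre (pre_mixed_false (by rw [← hcnt]; exact hi)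
          (by rw [← hcnt]; exact hj))
    · rw [pre_suffix_iff hi hj, pre_suffix_iff (by rw [← hcnt]; exact hi)
        (by rw [← hcnt]; exact hj), hcnt a, hcnt b]

theorem common_witness {s1 u1 s2 u2 t : List O} {a b : O} {i j : ℕ}
    (h1 : ScheduleEquiv σ (s1 ++ u1) t) (h2 : ScheduleEquiv σ (s2 ++ u2) t)
    (hc : Conflict σ a b) (hi : i < s1.count a) (hj : j < s2.count b) :
    i < s2.count a ∨ j < s1.count b := by
  by_contra hcon
  push_neg at hcon
  obtain ⟨h2a, h1b⟩ := hcon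
  have hta : i < t.count a := by
    have := equiv_count σ h1 a
    rw [List.count_append] at this
    omega
  have htb : j < t.count b := by
    have := equiv_count σ h2 b
    rw [List.count_append] at this
    omega
  have hpre1 : Precedes t a i b j := by
    refine (h1.2 a b i j hc).mp (pre_mixed hi h1b ?_)
    rw [equiv_count σ h1 b]; exact htb
  have hpre2 : Precedes t b j a i := by
    refine (h2.2 b a j i (conflict_symm σ hc)).mp (pre_mixed hj h2a ?_)
    rw [equiv_count σ h2 a]; exact hta
  obtain ⟨p, q, hp, hq, hpq⟩ := hpre1
  obtain ⟨q', p', hq', hp', hqp⟩ := hpre2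
  rw [hp] at hp'
  rw [hq] at hq'
  injection hp' with hp'
  injection hq' with hq'
  omega

end EquivLemmas

section SplitCore
variable {Q : Type u} {O : Type v} {R : Type w} (σ : O → Q → R × Q)

theorem split_core (t : List O) (d : O) (Pb : ℕ → Bool)
    (hclose : ∀ p q, p < q → q < t.length → Pb q = true →
      (t.getD p d = t.getD q d ∨ Conflict σ (t.getD p d) (t.getD q d)) → Pb p = true) :
    ScheduleEquiv σ
      ((((List.range t.length).filter Pb).map (fun k => t.getD k d)) ++
        (((List.range t.length).filter (fun k => !Pb k)).map (fun k => t.getD k d))) t ∧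
    ∀ (o : O) (i : ℕ),
      i < ((((List.range t.length).filter Pb).map (fun k => t.getD k d))).count o ↔
        ∃ p, occIdx t o i = some p ∧ Pb p = true := by
  classical
  set f : ℕ → O := fun k => t.getD k d with hf
  set A : List O := ((List.range t.length).filter Pb).map f with hA
  set B : List O := ((List.range t.length).filter (fun k => !Pb k)).map f with hB
  have hfk : ∀ k, k < t.length → t[k]? = some (f k) := fun k hk => getD_elem hk
  have hfo : ∀ k o, k < t.length → t[k]? = some o → f k = o := by
    intro k o hk h
    have := hfk k hk
    rw [h] at this
    exact (Option.some_inj.mp this).symm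
  have hAlen : A.length = cb Pb t.length := by rw [hA, List.length_map]; rfl
  have hBlen : B.length = cb (fun k => !Pb k) t.length := by rw [hB, List.length_map]; rfl
  have helem : ∀ k, k < t.length → ∀ o : O, ((f k == o) : Bool) = oP t o k := by
    intro k hk o
    have h1 : ((f k == o) = true) ↔ (oP t o k = true) := by
      simp only [beq_iff_eq, oP, decide_eq_true_eq]
      rw [hfk k hk, Option.some_inj]
    exact Bool.eq_iff_iff.mpr h1
  have hcbsel : ∀ (Qb : ℕ → Bool) (o : O) (p : ℕ), p ≤ t.length →
      cb (oP (((List.range t.length).filter Qb).map f) o) (cb Qb p)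
        = cb (fun k => oP t o k && Qb k) p := by
    intro Qb o p hp
    rw [cb_map_sel f Qb o hp]
    apply cb_congr
    intro k hk
    rw [helem k (by omega) o]
  have hcountA : ∀ o : O, A.count o = cb (fun k => oP t o k && Pb k) t.length := by
    intro o
    rw [← cb_count A o]
    have h1 := hcbsel Pb o t.length (le_refl _)
    rw [← hA, ← hAlen] at h1
    exact h1
  have hcountB : ∀ o : O, B.count o = cb (fun k => oP t o k && (fun j => !Pb j) k) t.length := by
    intro o
    rw [← cb_count B o]
    have h1 := hcbsel (fun k => !Pb k) o t.length (le_refl _)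
    rw [← hB, ← hBlen] at h1
    exact h1
  have hsel_all : ∀ p (o : O), p < t.length → t[p]? = some o → Pb p = true →
      cb (fun k => oP t o k && Pb k) p = cb (oP t o) p := by
    intro p o hp hpo hPp
    apply cb_congr
    intro k hk
    cases hok : oP t o k
    · simp
    · have hko : t[k]? = some o := by
        simpa [oP] using hok
      have hPk : Pb k = true := by
        apply hclose k p hk hp hPp
        left
        rw [show t.getD k d = f k from rfl, show t.getD p d = f p from rfl,
          hfo k o (by omega) hko, hfo p o hp hpo]
      simp [hPk]
  have hunsel_tail : ∀ p (o : O), p < t.length → t[p]? = some o → Pb p = false →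
      cb (fun k => oP t o k && Pb k) t.length = cb (fun k => oP t o k && Pb k) p := by
    intro p o hp hpo hPp
    apply cb_tail_false (by omega)
    intro k hk1 hk2
    cases hok : oP t o k
    · simp
    · have hko : t[k]? = some o := by simpa [oP] using hok
      rcases Nat.eq_or_lt_of_le hk1 with h | h
      · subst h; simp [hPp]
      · cases hPk : Pb k
        · simp
        · exfalso
          have := hclose p k h hk2 hPk (Or.inl (by
            rw [show t.getD p d = f p from rfl, show t.getD k d = f k from rfl,
              hfo p o hp hpo, hfo k o hk2 hko]))
          rw [hPp] at this
          exact Bool.false_ne_true this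
  -- the position map
  have hrho : ∀ (o : O) (i p : ℕ), occIdx t o i = some p →
      occIdx (A ++ B) o i
        = some (if Pb p then cb Pb p else A.length + cb (fun k => !Pb k) p) := by
    intro o i p hp
    obtain ⟨hplen, helemp, hcbp⟩ := occ_char.mp hp
    have hfp : f p = o := hfo p o hplen helemp
    by_cases hPp : Pb p = true
    · rw [if_pos hPp]
      apply occ_char.mpr
      have hlt : cb Pb p < A.length := by
        rw [hAlen]; exact cb_lt Pb hplen hPp
      refine ⟨by rw [List.length_append]; omega, ?_, ?_⟩
      · rw [List.getElem?_append_left hlt, hA, List.getElem?_map]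
        have h2 : ((List.range t.length).filter Pb)[cb Pb p]? = some p :=
          (sort_char Pb t.length (cb Pb p) p).mpr ⟨hplen, hPp, rfl⟩
        rw [h2]
        simp [hfp]
      · have h1 : cb (oP (A ++ B) o) (cb Pb p) = cb (oP A o) (cb Pb p) :=
          cb_prefix (by omega)
        rw [h1]
        have h2 := hcbsel Pb o p (by omega)
        rw [← hA] at h2
        rw [h2, hsel_all p o hplen helemp hPp, hcbp]
    · have hPp' : Pb p = false := by simpa using hPp
      rw [if_neg hPp]
      apply occ_char.mpr
      have hlt : cb (fun k => !Pb k) p < B.length := by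
        rw [hBlen]
        exact cb_lt _ hplen (by simp [hPp'])
      refine ⟨by rw [List.length_append]; omega, ?_, ?_⟩
      · rw [List.getElem?_append_right (by omega), Nat.add_sub_cancel_left,
          hB, List.getElem?_map]
        have h2 : ((List.range t.length).filter (fun k => !Pb k))[cb (fun k => !Pb k) p]? = some p :=
          (sort_char _ t.length _ p).mpr ⟨hplen, by simp [hPp'], rfl⟩
        rw [h2]
        simp [hfp]
      · rw [cb_add A B o (cb (fun k => !Pb k) p)]
        have h2 := hcbsel (fun k => !Pb k) o p (by omega)
        rw [← hB] at h2
        rw [h2, hcountA o, hunsel_tail p o hplen helemp hPp']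
        have h3 := cb_partition Pb (oP t o) p
        have h4 : cb (fun k => oP t o k && (fun j => !Pb j) k) p
            = cb (fun k => oP t o k && !Pb k) p := by
          apply cb_congr; intro k _; rfl
        rw [h4]
        omega
  -- strict monotonicity of the position map on related pairs
  have hstrict : ∀ p q, p < q → q < t.length →
      (f p = f q ∨ Conflict σ (f p) (f q)) →
      (if Pb p then cb Pb p else A.length + cb (fun k => !Pb k) p)
        < (if Pb q then cb Pb q else A.length + cb (fun k => !Pb k) q) := by
    intro p q hpq hq hdisj
    by_cases hPq : Pb q = true
    · have hPp : Pb p = true := hclose p q hpq hq hPq hdisj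
      rw [if_pos hPp, if_pos hPq]
      exact cb_lt Pb hpq hPp
    · rw [if_neg hPq]
      by_cases hPp : Pb p = true
      · rw [if_pos hPp]
        have : cb Pb p < A.length := by
          rw [hAlen]; exact cb_lt Pb (by omega) hPp
        omega
      · rw [if_neg hPp]
        have hPp' : Pb p = false := by simpa using hPp
        have : cb (fun k => !Pb k) p < cb (fun k => !Pb k) q :=
          cb_lt _ hpq (by simp [hPp'])
        omega
  -- multiset equality
  have hperm : (A ++ B).Perm t := by
    rw [hA, hB, ← List.map_append]
    have h1 : ((List.range t.length).filter Pb ++ (List.range t.length).filter (fun k => !Pb k)).Perm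
        (List.range t.length) := List.filter_append_perm Pb (List.range t.length)
    have h2 := h1.map f
    rw [hf] at h2
    rwa [map_getD_range t d] at h2
  have hcnt_eq : ∀ o : O, (A ++ B).count o = t.count o := fun o => hperm.count_eq o
  -- the equivalence
  refine ⟨equiv_of_counts_pre σ hcnt_eq ?_, ?_⟩
  · intro a b i j hcab
    constructor
    · rintro ⟨p', q', hp', hq', hlt⟩
      have hia : i < t.count a := by
        rw [← hcnt_eq a]
        exact occ_isSome.mp (by rw [hp']; rfl)
      have hjb : j < t.count b := by
        rw [← hcnt_eq b]
        exact occ_isSome.mp (by rw [hq']; rfl)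
      obtain ⟨p, hp⟩ := Option.isSome_iff_exists.mp (occ_isSome.mpr hia)
      obtain ⟨q, hq⟩ := Option.isSome_iff_exists.mp (occ_isSome.mpr hjb)
      have h1 := hrho a i p hp
      have h2 := hrho b j q hq
      rw [hp'] at h1
      rw [hq'] at h2
      injection h1 with h1
      injection h2 with h2
      subst h1
      subst h2
      have hfpa : f p = a := hfo p a (occ_pos_lt hp) (occ_char.mp hp).2.1
      have hfqb : f q = b := hfo q b (occ_pos_lt hq) (occ_char.mp hq).2.1
      refine ⟨p, q, hp, hq, ?_⟩
      rcases Nat.lt_trichotomy p q with h | h | h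
      · exact h
      · exfalso; subst h; omega
      · exfalso
        have := hstrict q p h (occ_pos_lt hp) (by
          rw [hfpa, hfqb]
          exact Or.inr (conflict_symm σ hcab))
        omega
    · rintro ⟨p, q, hp, hq, hlt⟩
      have h1 := hrho a i p hp
      have h2 := hrho b j q hq
      have hfpa : f p = a := hfo p a (occ_pos_lt hp) (occ_char.mp hp).2.1
      have hfqb : f q = b := hfo q b (occ_pos_lt hq) (occ_char.mp hq).2.1
      refine ⟨_, _, h1, h2, ?_⟩
      apply hstrict p q hlt (occ_pos_lt hq)
      rw [hfpa, hfqb]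
      exact Or.inr hcab
  -- the count characterization
  · intro o i
    constructor
    · intro hi
      have hit : i < t.count o := by
        have h1 : A.count o ≤ t.count o := by
          rw [hcountA o, ← cb_count t o]
          exact cb_le_of_imp (fun k _ hk => by
            cases h : oP t o k
            · rw [h] at hk; simp at hk
            · rfl)
        omega
      obtain ⟨p, hp⟩ := Option.isSome_iff_exists.mp (occ_isSome.mpr hit)
      refine ⟨p, hp, ?_⟩
      obtain ⟨hplen, helemp, hcbp⟩ := occ_char.mp hp
      by_contra hPp
      have hPp' : Pb p = false := by simpa using hPp
      rw [hcountA o, hunsel_tail p o hplen helemp hPp'] at hi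
      have : cb (fun k => oP t o k && Pb k) p ≤ cb (oP t o) p :=
        cb_le_of_imp (fun k _ hk => by
          cases h : oP t o k
          · rw [h] at hk; simp at hk
          · rfl)
      omega
    · rintro ⟨p, hp, hPp⟩
      obtain ⟨hplen, helemp, hcbp⟩ := occ_char.mp hp
      rw [hcountA o]
      have h1 : cb (fun k => oP t o k && Pb k) (p + 1)
          ≤ cb (fun k => oP t o k && Pb k) t.length := cb_mono _ (by omega)
      have h2 : cb (fun k => oP t o k && Pb k) (p + 1)
          = cb (fun k => oP t o k && Pb k) p + 1 := by
        rw [cb_succ]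
        have : (oP t o p && Pb p) = true := by
          simp [oP, helemp, hPp]
        rw [this]
        simp
      rw [hsel_all p o hplen helemp hPp, hcbp] at h2
      omega

end SplitCore

section Bridge
variable {Q : Type u} {O : Type v} {R : Type w} (σ : O → Q → R × Q)

theorem lt_iff_eq_nat {m n : ℕ} (h : ∀ i, i < m ↔ i < n) : m = n := by
  rcases Nat.lt_trichotomy m n with h' | h' | h'
  · exact absurd ((h m).mpr h') (lt_irrefl m)
  · exact h'
  · exact absurd ((h n).mp h') (lt_irrefl n)

theorem pre_same_lt {s : List O} {a : O} {i j : ℕ} (h : Precedes s a i a j) : i < j := by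
  obtain ⟨p, q, hp, hq, hpq⟩ := h
  obtain ⟨hplen, hep, hcp⟩ := occ_char.mp hp
  obtain ⟨hqlen, heq, hcq⟩ := occ_char.mp hq
  rw [← hcp, ← hcq]
  exact cb_lt _ hpq (by simp [oP, hep])

theorem pb_char (t : List O) (Sel : O → ℕ → Prop) (o : O) (i : ℕ) :
    (∃ p, occIdx t o i = some p ∧
        (fun k => @decide (∃ o', t[k]? = some o' ∧ Sel o' (cb (oP t o') k))
          (Classical.propDecidable _)) p = true)
      ↔ (i < t.count o ∧ Sel o i) := by
  constructor
  · rintro ⟨p, hp, hPp⟩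
    obtain ⟨hplen, helemp, hcbp⟩ := occ_char.mp hp
    simp only [decide_eq_true_eq] at hPp
    obtain ⟨o', ho', hs⟩ := hPp
    rw [helemp] at ho'
    injection ho' with ho'
    subst ho'
    rw [hcbp] at hs
    exact ⟨occ_isSome.mp (by rw [hp]; rfl), hs⟩
  · rintro ⟨hit, hs⟩
    obtain ⟨p, hp⟩ := Option.isSome_iff_exists.mp (occ_isSome.mpr hit)
    obtain ⟨hplen, helemp, hcbp⟩ := occ_char.mp hp
    refine ⟨p, hp, ?_⟩
    simp only [decide_eq_true_eq]
    exact ⟨o, helemp, by rw [hcbp]; exact hs⟩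

theorem down_of_family (t0 : List O) (Sel : O → ℕ → Prop)
    (H : ∀ b j, Sel b j → ∃ s0 u0 : List O, ScheduleEquiv σ (s0 ++ u0) t0 ∧
      j < s0.count b ∧ (∀ a i, i < s0.count a → Sel a i)) :
    ∀ a b i j, Precedes t0 a i b j → Sel b j → (a = b ∨ Conflict σ a b) → Sel a i := by
  intro a b i j hpre hSb hdisj
  obtain ⟨s0, u0, hE, hj, hall⟩ := H b j hSb
  rcases hdisj with rfl | hconf
  · have hij : i < j := pre_same_lt hpre
    exact hall a i (by omega)
  · have hpre' : Precedes (s0 ++ u0) a i b j := (hE.2 a b i j hconf).mpr hpre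
    by_contra hSa
    have hia : s0.count a ≤ i := by
      by_contra h
      exact hSa (hall a i (by omega))
    exact absurd hpre' (pre_mixed_false hia hj)

theorem close_of_down (t : List O) (d : O) (Sel : O → ℕ → Prop)
    (Hdown : ∀ a b i j, Precedes t a i b j → Sel b j → (a = b ∨ Conflict σ a b) → Sel a i) :
    ∀ p q, p < q → q < t.length →
      (fun k => @decide (∃ o, t[k]? = some o ∧ Sel o (cb (oP t o) k))
        (Classical.propDecidable _)) q = true →
      (t.getD p d = t.getD q d ∨ Conflict σ (t.getD p d) (t.getD q d)) →
      (fun k => @decide (∃ o, t[k]? = some o ∧ Sel o (cb (oP t o) k))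
        (Classical.propDecidable _)) p = true := by
  intro p q hpq hq hPq hdisj
  have hp : p < t.length := by omega
  have hta : t[p]? = some (t.getD p d) := getD_elem hp
  have htb : t[q]? = some (t.getD q d) := getD_elem hq
  simp only [decide_eq_true_eq] at hPq ⊢
  obtain ⟨o, ho, hs⟩ := hPq
  rw [htb] at ho
  injection ho with ho
  subst ho
  have hpre : Precedes t (t.getD p d) (cb (oP t (t.getD p d)) p)
      (t.getD q d) (cb (oP t (t.getD q d)) q) :=
    ⟨p, q, occ_char.mpr ⟨hp, hta, rfl⟩, occ_char.mpr ⟨hq, htb, rfl⟩, hpq⟩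
  exact ⟨t.getD p d, hta, Hdown _ _ _ _ hpre hs hdisj⟩

end Bridge

/-- every compatible set of traces admits a least upper bound
under the prefix order; moreover, every operation occurring in the least upper
bound occurs in some element of the set. -/
theorem trace_lub_exists
    {Q : Type u} {O : Type v} {R : Type w} (σ : O → Q → R × Q)
    (S : Set (Trace σ)) (hS : Compatible σ S) :
    ∃ u : Trace σ,
      (∀ x ∈ S, TraceLe σ x u) ∧
      (∀ z : Trace σ, (∀ x ∈ S, TraceLe σ x z) → TraceLe σ u z) ∧
      (∀ su : List O, u = Quotient.mk (scheduleSetoid σ) su →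
        ∀ o ∈ su, ∃ x ∈ S, ∃ sx : List O,
          x = Quotient.mk (scheduleSetoid σ) sx ∧ o ∈ sx) := by
  classical
  obtain ⟨z, hz⟩ := hS
  obtain ⟨t, ht⟩ := Quotient.exists_rep z
  have hz' : ∀ x, x ∈ S → ∃ s u : List O,
      x = Quotient.mk (scheduleSetoid σ) s ∧ z = Quotient.mk (scheduleSetoid σ) (s ++ u) := hz
  choose! sx ux hsx hux using hz'
  have hEq : ∀ x ∈ S, ScheduleEquiv σ (sx x ++ ux x) t := by
    intro x hx
    have h1 : Quotient.mk (scheduleSetoid σ) (sx x ++ ux x) = Quotient.mk (scheduleSetoid σ) t := by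
      rw [← hux x hx]
      exact ht.symm
    exact Quotient.exact h1
  by_cases hte : t = []
  · subst hte
    refine ⟨Quotient.mk (scheduleSetoid σ) [], ?_, ?_, ?_⟩
    · intro x hx
      have h2 := (hEq x hx).1
      have h3 : sx x ++ ux x = [] := (Multiset.coe_eq_coe.mp h2).eq_nil
      have h4 : sx x = [] := (List.append_eq_nil_iff.mp h3).1
      refine ⟨[], [], ?_, rfl⟩
      rw [hsx x hx, h4]
    · intro z' hub
      obtain ⟨t', ht'⟩ := Quotient.exists_rep z'
      exact ⟨[], t', rfl, ht'.symm⟩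
    · intro su hsu o ho
      have h2 : ScheduleEquiv σ [] su := Quotient.exact hsu
      have h3 : su = [] := (Multiset.coe_eq_coe.mp h2.1).symm.eq_nil
      rw [h3] at ho
      exact absurd ho List.not_mem_nil
  · set d : O := t.head hte with hd
    set Sel : O → ℕ → Prop := fun o i => ∃ x, x ∈ S ∧ i < (sx x).count o with hSelDef
    have hSelIff : ∀ (o : O) (i : ℕ), Sel o i ↔ ∃ x, x ∈ S ∧ i < (sx x).count o :=
      fun _ _ => Iff.rfl
    have hH : ∀ b j, Sel b j → ∃ s0 u0 : List O, ScheduleEquiv σ (s0 ++ u0) t ∧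
        j < s0.count b ∧ (∀ a i, i < s0.count a → Sel a i) := by
      intro b j hbj
      obtain ⟨x, hx, hj⟩ := (hSelIff b j).mp hbj
      exact ⟨sx x, ux x, hEq x hx, hj, fun a i hi => (hSelIff a i).mpr ⟨x, hx, hi⟩⟩
    have hDown := down_of_family σ t Sel hH
    obtain ⟨hAB, hcntA⟩ := split_core σ t d
      (fun k => @decide (∃ o, t[k]? = some o ∧ Sel o (cb (oP t o) k)) (Classical.propDecidable _))
      (close_of_down σ t d Sel hDown)
    set A : List O := ((List.range t.length).filter
      (fun k => @decide (∃ o, t[k]? = some o ∧ Sel o (cb (oP t o) k))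
        (Classical.propDecidable _))).map (fun k => t.getD k d) with hA
    set B : List O := ((List.range t.length).filter
      (fun k => !(@decide (∃ o, t[k]? = some o ∧ Sel o (cb (oP t o) k))
        (Classical.propDecidable _)))).map (fun k => t.getD k d) with hB
    have hAiff : ∀ (o : O) (i : ℕ), i < A.count o ↔ (i < t.count o ∧ Sel o i) :=
      fun o i => (hcntA o i).trans (pb_char t Sel o i)
    refine ⟨Quotient.mk (scheduleSetoid σ) A, ?_, ?_, ?_⟩
    · -- upper bound
      intro x hx
      have hsxA : ∀ o : O, (sx x).count o ≤ A.count o := by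
        intro o
        have hstep : ∀ i, i < (sx x).count o → i < A.count o := by
          intro i hi
          apply (hAiff o i).mpr
          refine ⟨?_, (hSelIff o i).mpr ⟨x, hx, hi⟩⟩
          have h2 := equiv_count σ (hEq x hx) o
          rw [List.count_append] at h2
          omega
        rcases Nat.eq_zero_or_pos ((sx x).count o) with h | h
        · omega
        · have := hstep ((sx x).count o - 1) (by omega); omega
      have hDown2 : ∀ a b i j, Precedes A a i b j → (j < (sx x).count b) →
          (a = b ∨ Conflict σ a b) → i < (sx x).count a := by
        intro a b i j hpre hj hdisj
        rcases hdisj with rfl | hconf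
        · have := pre_same_lt hpre; omega
        · have hiA : i < A.count a := (pre_isSome hpre).1
          have hjA : j < A.count b := (pre_isSome hpre).2
          have h1 : Precedes (A ++ B) a i b j := (pre_prefix_iff hiA hjA).mpr hpre
          have h2 : Precedes t a i b j := (hAB.2 a b i j hconf).mp h1
          have h3 : Precedes (sx x ++ ux x) a i b j := ((hEq x hx).2 a b i j hconf).mpr h2
          by_contra hcon
          exact absurd h3 (pre_mixed_false (by omega) hj)
      obtain ⟨hAB2, hcnt2⟩ := split_core σ A d
        (fun k => @decide (∃ o, A[k]? = some o ∧ (fun o i => i < (sx x).count o) o (cb (oP A o) k))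
          (Classical.propDecidable _))
        (close_of_down σ A d (fun o i => i < (sx x).count o) hDown2)
      set A1 : List O := ((List.range A.length).filter
        (fun k => @decide (∃ o, A[k]? = some o ∧ (fun o i => i < (sx x).count o) o (cb (oP A o) k))
          (Classical.propDecidable _))).map (fun k => A.getD k d) with hA1
      set B1 : List O := ((List.range A.length).filter
        (fun k => !(@decide (∃ o, A[k]? = some o ∧ (fun o i => i < (sx x).count o) o (cb (oP A o) k))
          (Classical.propDecidable _)))).map (fun k => A.getD k d) with hB1
      have hA1iff : ∀ (o : O) (i : ℕ), i < A1.count o ↔ (i < A.count o ∧ i < (sx x).count o) :=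
        fun o i => (hcnt2 o i).trans (pb_char A (fun o i => i < (sx x).count o) o i)
      have hA1cnt : ∀ o : O, A1.count o = (sx x).count o := by
        intro o
        apply lt_iff_eq_nat
        intro i
        rw [hA1iff o i]
        constructor
        · rintro ⟨_, h⟩; exact h
        · intro h; exact ⟨lt_of_lt_of_le h (hsxA o), h⟩
      have hxA1 : ScheduleEquiv σ (sx x) A1 := by
        apply equiv_of_counts_pre σ (fun o => (hA1cnt o).symm)
        intro a b i j hconf
        by_cases hi : i < (sx x).count a
        · by_cases hj : j < (sx x).count b
          · have c1 : Precedes (sx x) a i b j ↔ Precedes (sx x ++ ux x) a i b j :=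
              (pre_prefix_iff hi hj).symm
            have c2 := (hEq x hx).2 a b i j hconf
            have c3 := (hAB.2 a b i j hconf).symm
            have c4 : Precedes (A ++ B) a i b j ↔ Precedes A a i b j :=
              pre_prefix_iff (lt_of_lt_of_le hi (hsxA a)) (lt_of_lt_of_le hj (hsxA b))
            have c5 := (hAB2.2 a b i j hconf).symm
            have c6 : Precedes (A1 ++ B1) a i b j ↔ Precedes A1 a i b j :=
              pre_prefix_iff (by rw [hA1cnt]; exact hi) (by rw [hA1cnt]; exact hj)
            exact c1.trans (c2.trans (c3.trans (c4.trans (c5.trans c6))))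
          · constructor
            · intro h; exact absurd (pre_isSome h).2 (by omega)
            · intro h
              have := (pre_isSome h).2
              rw [hA1cnt b] at this
              omega
        · constructor
          · intro h; exact absurd (pre_isSome h).1 (by omega)
          · intro h
            have := (pre_isSome h).1
            rw [hA1cnt a] at this
            omega
      refine ⟨A1, B1, ?_, ?_⟩
      · rw [hsx x hx]; exact Quotient.sound hxA1
      · exact (Quotient.sound hAB2).symm
    · -- least upper bound
      intro z' hub
      obtain ⟨t', ht'⟩ := Quotient.exists_rep z'
      have hub' : ∀ x, x ∈ S → ∃ s u : List O,
          x = Quotient.mk (scheduleSetoid σ) s ∧ z' = Quotient.mk (scheduleSetoid σ) (s ++ u) := hub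
      choose! sx' ux' hsx' hux' using hub'
      have hEq' : ∀ x ∈ S, ScheduleEquiv σ (sx' x ++ ux' x) t' := by
        intro x hx
        have h1 : Quotient.mk (scheduleSetoid σ) (sx' x ++ ux' x)
            = Quotient.mk (scheduleSetoid σ) t' := by
          rw [← hux' x hx]
          exact ht'.symm
        exact Quotient.exact h1
      have hsxcnt : ∀ x ∈ S, ∀ o : O, (sx' x).count o = (sx x).count o := by
        intro x hx o
        have h1 : Quotient.mk (scheduleSetoid σ) (sx x) = Quotient.mk (scheduleSetoid σ) (sx' x) := by
          rw [← hsx x hx, ← hsx' x hx]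
        exact (equiv_count σ (Quotient.exact h1) o).symm
      have hH' : ∀ b j, Sel b j → ∃ s0 u0 : List O, ScheduleEquiv σ (s0 ++ u0) t' ∧
          j < s0.count b ∧ (∀ a i, i < s0.count a → Sel a i) := by
        intro b j hbj
        obtain ⟨x, hx, hj⟩ := (hSelIff b j).mp hbj
        exact ⟨sx' x, ux' x, hEq' x hx, by rw [hsxcnt x hx]; exact hj,
          fun a i hi => (hSelIff a i).mpr ⟨x, hx, by rw [← hsxcnt x hx]; exact hi⟩⟩
      have hDown' := down_of_family σ t' Sel hH'
      obtain ⟨hAB', hcnt'⟩ := split_core σ t' d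
        (fun k => @decide (∃ o, t'[k]? = some o ∧ Sel o (cb (oP t' o) k)) (Classical.propDecidable _))
        (close_of_down σ t' d Sel hDown')
      set A' : List O := ((List.range t'.length).filter
        (fun k => @decide (∃ o, t'[k]? = some o ∧ Sel o (cb (oP t' o) k))
          (Classical.propDecidable _))).map (fun k => t'.getD k d) with hA'
      set B' : List O := ((List.range t'.length).filter
        (fun k => !(@decide (∃ o, t'[k]? = some o ∧ Sel o (cb (oP t' o) k))
          (Classical.propDecidable _)))).map (fun k => t'.getD k d) with hB'
      have hAiff' : ∀ (o : O) (i : ℕ), i < A'.count o ↔ (i < t'.count o ∧ Sel o i) :=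
        fun o i => (hcnt' o i).trans (pb_char t' Sel o i)
      have hSelbound : ∀ (o : O) (i : ℕ), Sel o i → i < t.count o ∧ i < t'.count o := by
        intro o i hoi
        obtain ⟨x, hx, hi⟩ := (hSelIff o i).mp hoi
        constructor
        · have h2 := equiv_count σ (hEq x hx) o
          rw [List.count_append] at h2; omega
        · have h2 := equiv_count σ (hEq' x hx) o
          rw [List.count_append, hsxcnt x hx] at h2; omega
      have hAcnt' : ∀ o : O, A.count o = A'.count o := by
        intro o; apply lt_iff_eq_nat; intro i
        rw [hAiff o i, hAiff' o i]
        constructor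
        · rintro ⟨_, h⟩; exact ⟨(hSelbound o i h).2, h⟩
        · rintro ⟨_, h⟩; exact ⟨(hSelbound o i h).1, h⟩
      have hAA' : ScheduleEquiv σ A A' := by
        apply equiv_of_counts_pre σ hAcnt'
        intro a b i j hconf
        by_cases hi : i < A.count a
        · by_cases hj : j < A.count b
          · obtain ⟨x1, hx1, hi1⟩ := (hSelIff a i).mp ((hAiff a i).mp hi).2
            obtain ⟨x2, hx2, hj2⟩ := (hSelIff b j).mp ((hAiff b j).mp hj).2
            have hcom := common_witness σ (hEq x1 hx1) (hEq x2 hx2) hconf hi1 hj2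
            obtain ⟨x, hx, hia, hjb⟩ : ∃ x, x ∈ S ∧ i < (sx x).count a ∧ j < (sx x).count b := by
              rcases hcom with h | h
              · exact ⟨x2, hx2, h, hj2⟩
              · exact ⟨x1, hx1, hi1, h⟩
            have hxx' : ScheduleEquiv σ (sx x) (sx' x) := by
              have h1 : Quotient.mk (scheduleSetoid σ) (sx x)
                  = Quotient.mk (scheduleSetoid σ) (sx' x) := by
                rw [← hsx x hx, ← hsx' x hx]
              exact Quotient.exact h1
            have c1 : Precedes A a i b j ↔ Precedes (A ++ B) a i b j := (pre_prefix_iff hi hj).symm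
            have c2 := hAB.2 a b i j hconf
            have c3 := ((hEq x hx).2 a b i j hconf).symm
            have c4 : Precedes (sx x ++ ux x) a i b j ↔ Precedes (sx x) a i b j :=
              pre_prefix_iff hia hjb
            have c5 := hxx'.2 a b i j hconf
            have c6 : Precedes (sx' x) a i b j ↔ Precedes (sx' x ++ ux' x) a i b j :=
              (pre_prefix_iff (by rw [hsxcnt x hx]; exact hia)
                (by rw [hsxcnt x hx]; exact hjb)).symm
            have c7 := (hEq' x hx).2 a b i j hconf
            have c8 := (hAB'.2 a b i j hconf).symm
            have c9 : Precedes (A' ++ B') a i b j ↔ Precedes A' a i b j :=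
              pre_prefix_iff (by rw [← hAcnt' a]; exact hi) (by rw [← hAcnt' b]; exact hj)
            exact c1.trans (c2.trans (c3.trans (c4.trans (c5.trans
              (c6.trans (c7.trans (c8.trans c9)))))))
          · constructor
            · intro h; exact absurd (pre_isSome h).2 (by omega)
            · intro h; have := (pre_isSome h).2; rw [← hAcnt' b] at this; omega
        · constructor
          · intro h; exact absurd (pre_isSome h).1 (by omega)
          · intro h; have := (pre_isSome h).1; rw [← hAcnt' a] at this; omega
      refine ⟨A', B', Quotient.sound hAA', ?_⟩
      rw [← ht']
      exact (Quotient.sound hAB').symm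
    · -- origin of operations
      intro su hsu o ho
      have hequiv : ScheduleEquiv σ A su := Quotient.exact hsu
      have h1 : 0 < su.count o := List.count_pos_iff.mpr ho
      have h2 : 0 < A.count o := by rw [equiv_count σ hequiv o]; exact h1
      obtain ⟨x, hx, h3⟩ := (hSelIff o 0).mp ((hAiff o 0).mp h2).2
      exact ⟨x, hx, sx x, hsx x hx, List.count_pos_iff.mp h3⟩
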